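/- Let U: ℝ^d → ℝ be continuously differentiable with ∇U bounded and Lipschitz continuous, and let T > 0. Define s_{M2}(x,y) := exp((U(x) − U(y))₊/T) and ŝ_{M2}(x,y) := exp(⟨∇U(x), x − y⟩₊/T), where a₊ := max{a,0}. Then there exist positive constants M and c₁ depending only on U and T such that for all x, y ∈ ℝ^d: |s_{M2}(x,y) − ŝ_{M2}(x,y)| ≤ c₁ exp(M Σ_{i=1}^d |y_i − x_i|) ‖y − x‖², where ‖·‖ is the Euclidean norm. -/

import Mathlib

open MeasureTheory

lemma exp_sub_exp_le_aux (a b : ℝ) :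
    |Real.exp a - Real.exp b| ≤ Real.exp (max a b) * |a - b| := by
  wlog h : b ≤ a with H
  · rw [abs_sub_comm, max_comm, abs_sub_comm a]
    exact H b a (le_of_not_ge h)
  rw [abs_of_nonneg (sub_nonneg.2 (Real.exp_le_exp.2 h)), abs_of_nonneg (sub_nonneg.2 h),
    max_eq_left h]
  have h1 : (-(a - b)) + 1 ≤ Real.exp (-(a - b)) := Real.add_one_le_exp _
  have h2 : Real.exp (-(a - b)) * Real.exp a = Real.exp b := by
    rw [← Real.exp_add]; ring_nf
  nlinarith [Real.exp_pos a, Real.exp_pos b]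

lemma taylor_aux {E : Type*} [NormedAddCommGroup E] [NormedSpace ℝ E]
    {U : E → ℝ} (hU : ContDiff ℝ 1 U) {L : NNReal} (hlip : LipschitzWith L (fderiv ℝ U))
    (x y : E) : |U y - U x - fderiv ℝ U x (y - x)| ≤ L * ‖y - x‖ ^ 2 := by
  set g : E → ℝ := fun z => U z - fderiv ℝ U x z with hg
  have hUd : Differentiable ℝ U := hU.differentiable one_ne_zero
  have hgd : ∀ z, DifferentiableAt ℝ g z := fun z =>
    (hUd z).sub ((fderiv ℝ U x).differentiable z)
  have hgf : ∀ z, fderiv ℝ g z = fderiv ℝ U z - fderiv ℝ U x := by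
    intro z
    rw [hg]
    rw [fderiv_fun_sub (hUd z) ((fderiv ℝ U x).differentiable z), (fderiv ℝ U x).fderiv]
  have hseg : ∀ z ∈ segment ℝ x y, ‖fderiv ℝ g z‖ ≤ L * ‖y - x‖ := by
    intro z hz
    rw [hgf]
    calc ‖fderiv ℝ U z - fderiv ℝ U x‖ ≤ L * ‖z - x‖ := by
          have := hlip.dist_le_mul z x
          rwa [dist_eq_norm, dist_eq_norm] at this
      _ ≤ L * ‖y - x‖ := by
          obtain ⟨s, t, hs, ht, hst, rfl⟩ := hz
          have hz' : s • x + t • y - x = t • (y - x) := by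
            rw [smul_sub]
            have : s • x = x - t • x := by
              rw [eq_sub_iff_add_eq, ← add_smul, hst, one_smul]
            rw [this]; abel
          rw [hz', norm_smul, Real.norm_eq_abs, abs_of_nonneg ht]
          have : t * ‖y - x‖ ≤ 1 * ‖y - x‖ :=
            mul_le_mul_of_nonneg_right (by linarith) (norm_nonneg _)
          rw [one_mul] at this
          exact mul_le_mul_of_nonneg_left this L.2
  have hkey := (convex_segment x y).norm_image_sub_le_of_norm_fderiv_le
    (fun z _ => hgd z) hseg (left_mem_segment ℝ x y) (right_mem_segment ℝ x y)
  have : g y - g x = U y - U x - fderiv ℝ U x (y - x) := by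
    simp only [hg, map_sub]; ring
  rw [this] at hkey
  calc |U y - U x - fderiv ℝ U x (y - x)| ≤ L * ‖y - x‖ * ‖y - x‖ := hkey
    _ = L * ‖y - x‖ ^ 2 := by ring

/-- Lemma 1 of the paper: the acceptance factor `s_{M2}(x,y) = exp((U(x)−U(y))₊/T)` of the
second Metropolis-Hastings process and its linearization
`ŝ_{M2}(x,y) = exp(⟨∇U(x), x−y⟩₊/T)` differ by at most
`c₁ exp(M Σᵢ |yᵢ − xᵢ|) ‖y − x‖²` for constants `M, c₁ > 0` depending only on `U` and `T`. -/
theorem mh2_acceptance_linearization {d : ℕ} (T : ℝ) (hT : 0 < T)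
    (U : EuclideanSpace ℝ (Fin d) → ℝ) (hU : ContDiff ℝ 1 U)
    (K : ℝ) (hbd : ∀ x, ‖fderiv ℝ U x‖ ≤ K)
    (L : NNReal) (hlip : LipschitzWith L (fderiv ℝ U)) :
    ∃ M c₁ : ℝ, 0 < M ∧ 0 < c₁ ∧
      ∀ x y : EuclideanSpace ℝ (Fin d),
        |Real.exp (max (U x - U y) 0 / T) - Real.exp (max (fderiv ℝ U x (x - y)) 0 / T)|
          ≤ c₁ * Real.exp (M * ∑ i, |y i - x i|) * ‖y - x‖ ^ 2 := by
  have hK : 0 ≤ K := le_trans (norm_nonneg _) (hbd 0)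
  refine ⟨K / T + 1, L / T + 1, by positivity, by positivity, fun x y => ?_⟩
  set S : ℝ := ∑ i, |y i - x i| with hS
  have hS0 : 0 ≤ S := Finset.sum_nonneg fun i _ => abs_nonneg _
  -- ℓ² ≤ ℓ¹
  have hl1 : ‖y - x‖ ≤ S := by
    rw [EuclideanSpace.norm_eq]
    have h1 : ∑ i, ‖(y - x) i‖ ^ 2 ≤ (∑ i, ‖(y - x) i‖) ^ 2 :=
      Finset.sum_sq_le_sq_sum_of_nonneg fun i _ => norm_nonneg _
    calc √(∑ i, ‖(y - x) i‖ ^ 2) ≤ √((∑ i, ‖(y - x) i‖) ^ 2) := Real.sqrt_le_sqrt h1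
      _ = ∑ i, ‖(y - x) i‖ := Real.sqrt_sq (Finset.sum_nonneg fun i _ => norm_nonneg _)
      _ = S := by
          rw [hS]
          refine Finset.sum_congr rfl fun i _ => ?_
          simp [Real.norm_eq_abs, abs_sub_comm]
  set a : ℝ := max (U x - U y) 0 / T with ha
  set b : ℝ := max (fderiv ℝ U x (x - y)) 0 / T with hb
  -- exponent bounds
  have hUx : |U x - U y| ≤ K * ‖y - x‖ := by
    have := (convex_univ : Convex ℝ (Set.univ : Set (EuclideanSpace ℝ (Fin d)))).norm_image_sub_le_of_norm_fderiv_le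
      (fun z _ => (hU.differentiable one_ne_zero) z) (fun z _ => hbd z)
      (Set.mem_univ y) (Set.mem_univ x)
    simpa [Real.norm_eq_abs, norm_sub_rev x y] using this
  have hder : |fderiv ℝ U x (x - y)| ≤ K * ‖y - x‖ := by
    calc |fderiv ℝ U x (x - y)| ≤ ‖fderiv ℝ U x‖ * ‖x - y‖ := (fderiv ℝ U x).le_opNorm _
      _ ≤ K * ‖y - x‖ := by
          rw [norm_sub_rev]
          exact mul_le_mul_of_nonneg_right (hbd x) (norm_nonneg _)
  have hmax : max a b ≤ (K / T + 1) * S := by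
    have hbound : ∀ c : ℝ, |c| ≤ K * ‖y - x‖ → max c 0 / T ≤ (K / T + 1) * S := by
      intro c hc
      have h1 : max c 0 ≤ K * ‖y - x‖ := by
        rcases le_or_gt c 0 with h | h
        · simp [max_eq_right h]; positivity
        · rw [max_eq_left h.le]; exact (le_abs_self c).trans hc
      have h2 : K * ‖y - x‖ ≤ K * S := mul_le_mul_of_nonneg_left hl1 hK
      calc max c 0 / T ≤ K * S / T := (div_le_div_iff_of_pos_right hT).2 (h1.trans h2)
        _ = K / T * S := by ring
        _ ≤ (K / T + 1) * S := by nlinarith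
    exact max_le (hbound _ hUx) (hbound _ hder)
  -- difference of exponents
  have hdiff : |a - b| ≤ (↑L / T) * ‖y - x‖ ^ 2 := by
    rw [ha, hb, div_sub_div_same, abs_div, abs_of_pos hT, div_le_iff₀ hT]
    have h1 : |max (U x - U y) 0 - max (fderiv ℝ U x (x - y)) 0|
        ≤ |(U x - U y) - fderiv ℝ U x (x - y)| := abs_max_sub_max_le_abs _ _ _
    have h2 : |(U x - U y) - fderiv ℝ U x (x - y)| ≤ L * ‖y - x‖ ^ 2 := by
      have := taylor_aux hU hlip x y
      have heq : (U x - U y) - fderiv ℝ U x (x - y) = -(U y - U x - fderiv ℝ U x (y - x)) := by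
        rw [show (x : EuclideanSpace ℝ (Fin d)) - y = -(y - x) from (neg_sub y x).symm, map_neg]; ring
      rw [heq, abs_neg]; exact this
    calc |max (U x - U y) 0 - max (fderiv ℝ U x (x - y)) 0| ≤ L * ‖y - x‖ ^ 2 := h1.trans h2
      _ = ↑L / T * ‖y - x‖ ^ 2 * T := by field_simp
  calc |Real.exp a - Real.exp b| ≤ Real.exp (max a b) * |a - b| := exp_sub_exp_le_aux a b
    _ ≤ Real.exp ((K / T + 1) * S) * ((↑L / T) * ‖y - x‖ ^ 2) := by
        apply mul_le_mul (Real.exp_le_exp.2 hmax) hdiff (abs_nonneg _) (Real.exp_pos _).le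
    _ ≤ (↑L / T + 1) * Real.exp ((K / T + 1) * S) * ‖y - x‖ ^ 2 := by
        have h1 : (↑L / T : ℝ) ≤ ↑L / T + 1 := by linarith
        have h2 : (0:ℝ) ≤ Real.exp ((K / T + 1) * S) := (Real.exp_pos _).le
        nlinarith [sq_nonneg ‖y - x‖, L.coe_nonneg]
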